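/- For every positive integer n of NAF-bitlength k, the number of optimal (minimal-weight) k-bit BSD representations of n equals the leading coefficient of the Stern polynomial B_{2^k - n}, and the number of zeros in an optimal representation equals deg(B_{2^k - n}). -/

import Mathlib

open Polynomial in
/-- The Stern polynomial: `B 0 = 0`, `B 1 = 1`, `B (2n) = t * B n`, `B (2n+1) = B n + B (n+1)`. -/
noncomputable def sternP : ℕ → Polynomial ℕ
  | 0 => 0
  | 1 => 1
  | n + 2 =>
    if (n + 2) % 2 = 0 then X * sternP (n / 2 + 1)
    else sternP (n / 2 + 1) + sternP (n / 2 + 2)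
decreasing_by all_goals omega

/-- The digits of a BSD representation lie in {-1, 0, 1}. -/
def IsBSDDigits {i : ℕ} (b : Fin i → ℤ) : Prop := ∀ j, b j ∈ ({-1, 0, 1} : Set ℤ)

/-- The value represented by the digit string `b` (least significant digit `b 0`). -/
def bsdVal {i : ℕ} (b : Fin i → ℤ) : ℤ := ∑ j : Fin i, b j * 2 ^ (j : ℕ)

/-- `b` is a (not necessarily reduced) non-adjacent form digit string of length `k`:
digits in {-1,0,1}, no two adjacent digits both nonzero, and nonzero leading digit
(when `k > 0`). -/
def IsReducedNAF {k : ℕ} (b : Fin k → ℤ) : Prop :=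
  IsBSDDigits b ∧
  (∀ j : Fin k, ∀ h : (j : ℕ) + 1 < k, b j = 0 ∨ b ⟨(j : ℕ) + 1, h⟩ = 0) ∧
  (∀ h : 0 < k, b ⟨k - 1, Nat.sub_lt h one_pos⟩ ≠ 0)

/-- `m` has a reduced NAF representation of bitlength `k`. -/
def HasNAFLen (m : ℤ) (k : ℕ) : Prop :=
  ∃ b : Fin k → ℤ, IsReducedNAF b ∧ bsdVal b = m

/-- `I k`: the set of positive integers of NAF-bitlength `k`. -/
def NAFInterval (k : ℕ) : Set ℕ := {n : ℕ | HasNAFLen (n : ℤ) k}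

/-- `a k = min I k`: `a 1 = 1`, `a 2 = 2`, `a k = 2^(k-2) + a (k-2)`. -/
def aseq : ℕ → ℕ
  | 0 => 0
  | 1 => 1
  | 2 => 2
  | k + 3 => 2 ^ (k + 1) + aseq (k + 1)

/-- The NAF-bitlength of `n`. -/
noncomputable def nafLen (n : ℕ) : ℕ := sInf {k : ℕ | HasNAFLen (n : ℤ) k}

/-- The minimal Hamming weight of a BSD representation of `n` of length
equal to its NAF-bitlength. -/
noncomputable def minWeight (n : ℕ) : ℕ :=
  sInf {w : ℕ | ∃ b : Fin (nafLen n) → ℤ,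
    IsBSDDigits b ∧ bsdVal b = (n : ℤ) ∧ {j | b j ≠ 0}.ncard = w}

/-- `Z n`: the number of zeros in an optimal (minimal-weight) BSD representation of `n`
of length equal to its NAF-bitlength. -/
noncomputable def Zfun (n : ℕ) : ℕ := nafLen n - minWeight n

/-- `M n`: the number of optimal (minimal-weight) BSD representations of `n`
of length equal to its NAF-bitlength. -/
noncomputable def Mfun (n : ℕ) : ℕ :=
  {b : Fin (nafLen n) → ℤ |
    IsBSDDigits b ∧ bsdVal b = (n : ℤ) ∧ {j | b j ≠ 0}.ncard = minWeight n}.ncard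

open Polynomial

lemma sternP_zero : sternP 0 = 0 := by rw [sternP]
lemma sternP_one : sternP 1 = 1 := by rw [sternP]

lemma sternP_two_mul (m : ℕ) (hm : 0 < m) : sternP (2 * m) = X * sternP m := by
  obtain ⟨a, rfl⟩ := Nat.exists_eq_add_of_lt hm
  have h : 2 * (a + 1) = 2 * a + 2 := by ring
  rw [zero_add, h, sternP]
  have : (2 * a + 2) % 2 = 0 := by omega
  rw [if_pos this]
  congr 2
  omega

lemma sternP_odd (m : ℕ) : sternP (2 * m + 1) = sternP m + sternP (m + 1) := by
  rcases Nat.eq_zero_or_pos m with rfl | hm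
  · simp [sternP_zero, sternP_one]
  obtain ⟨a, rfl⟩ := Nat.exists_eq_add_of_lt hm
  have h : 2 * (a + 1) + 1 = (2 * a + 1) + 2 := by ring
  rw [zero_add, h, sternP]
  have : (2 * a + 1 + 2) % 2 ≠ 0 := by omega
  rw [if_neg this]
  congr 2 <;> omega

noncomputable def reps (k : ℕ) (n : ℤ) : Finset (Fin k → ℤ) :=
  (Fintype.piFinset fun _ : Fin k => ({-1, 0, 1} : Finset ℤ)).filter fun b => bsdVal b = n

lemma mem_reps {k : ℕ} {n : ℤ} {b : Fin k → ℤ} :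
    b ∈ reps k n ↔ (∀ j, b j = -1 ∨ b j = 0 ∨ b j = 1) ∧ bsdVal b = n := by
  simp [reps, Fintype.mem_piFinset]

def zeros {k : ℕ} (b : Fin k → ℤ) : ℕ := (Finset.univ.filter fun j => b j = 0).card

noncomputable def repPoly (k : ℕ) (n : ℤ) : Polynomial ℕ :=
  ∑ b ∈ reps k n, X ^ zeros b

lemma bsdVal_cons {k : ℕ} (d : ℤ) (b : Fin k → ℤ) :
    bsdVal (Fin.cons d b) = d + 2 * bsdVal b := by
  simp only [bsdVal, Fin.sum_univ_succ, Fin.cons_zero, Fin.cons_succ, pow_zero, mul_one,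
    Fin.val_succ, Finset.mul_sum]
  have h0 : d * 2 ^ ((0 : Fin (k+1)) : ℕ) = d := by norm_num
  rw [h0]
  congr 1
  apply Finset.sum_congr rfl
  intro j _
  ring

lemma zeros_cons {k : ℕ} (d : ℤ) (b : Fin k → ℤ) :
    zeros (Fin.cons d b) = (if d = 0 then 1 else 0) + zeros b := by
  simp only [zeros, Finset.card_filter, Fin.sum_univ_succ, Fin.cons_zero, Fin.cons_succ]

lemma repPoly_even (k : ℕ) (n : ℤ) (hn : n % 2 = 0) :
    repPoly (k + 1) n = X * repPoly k (n / 2) := by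
  rw [repPoly, repPoly, Finset.mul_sum]
  refine Finset.sum_bij' (fun b _ => Fin.tail b) (fun c _ => Fin.cons 0 c) ?_ ?_ ?_ ?_ ?_
  · intro b hb
    rw [mem_reps] at hb ⊢
    obtain ⟨hd, hv⟩ := hb
    have hb0 : b 0 = 0 := by
      have h1 := hd 0
      have h2 : bsdVal (Fin.cons (b 0) (Fin.tail b)) = n := by rw [Fin.cons_self_tail]; exact hv
      rw [bsdVal_cons] at h2
      omega
    refine ⟨fun j => hd j.succ, ?_⟩
    have h2 : bsdVal (Fin.cons (b 0) (Fin.tail b)) = n := by rw [Fin.cons_self_tail]; exact hv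
    rw [bsdVal_cons, hb0] at h2
    omega
  · intro c hc
    rw [mem_reps] at hc ⊢
    obtain ⟨hd, hv⟩ := hc
    refine ⟨fun j => ?_, ?_⟩
    · rcases Fin.eq_zero_or_eq_succ j with rfl | ⟨i, rfl⟩
      · simp
      · simpa using hd i
    · rw [bsdVal_cons, hv]; omega
  · intro b hb
    have hb0 : b 0 = 0 := by
      rw [mem_reps] at hb
      obtain ⟨hd, hv⟩ := hb
      have h1 := hd 0
      have h2 : bsdVal (Fin.cons (b 0) (Fin.tail b)) = n := by rw [Fin.cons_self_tail]; exact hv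
      rw [bsdVal_cons] at h2
      omega
    rw [← hb0, Fin.cons_self_tail]
  · intro c _
    simp
  · intro b hb
    have hb0 : b 0 = 0 := by
      rw [mem_reps] at hb
      obtain ⟨hd, hv⟩ := hb
      have h1 := hd 0
      have h2 : bsdVal (Fin.cons (b 0) (Fin.tail b)) = n := by rw [Fin.cons_self_tail]; exact hv
      rw [bsdVal_cons] at h2
      omega
    have hz : zeros b = 1 + zeros (Fin.tail b) := by
      have h3 := zeros_cons (b 0) (Fin.tail b)
      rw [Fin.cons_self_tail, hb0] at h3
      simpa using h3
    rw [hz, pow_add, pow_one]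

lemma sum_filter_digit (k : ℕ) (n d : ℤ) (hd : d = -1 ∨ d = 1) (h2 : (n - d) % 2 = 0) :
    ∑ b ∈ (reps (k + 1) n).filter (fun b => b 0 = d), (X : Polynomial ℕ) ^ zeros b
      = repPoly k ((n - d) / 2) := by
  rw [repPoly]
  refine Finset.sum_bij' (fun b _ => Fin.tail b) (fun c _ => Fin.cons d c) ?_ ?_ ?_ ?_ ?_
  · intro b hb
    rw [Finset.mem_filter, mem_reps] at hb
    obtain ⟨⟨hdig, hv⟩, hb0⟩ := hb
    rw [mem_reps]
    refine ⟨fun j => hdig j.succ, ?_⟩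
    have hc : bsdVal (Fin.cons (b 0) (Fin.tail b)) = n := by rw [Fin.cons_self_tail]; exact hv
    rw [bsdVal_cons, hb0] at hc
    omega
  · intro c hc
    rw [mem_reps] at hc
    obtain ⟨hdig, hv⟩ := hc
    rw [Finset.mem_filter, mem_reps]
    refine ⟨⟨fun j => ?_, ?_⟩, by simp⟩
    · rcases Fin.eq_zero_or_eq_succ j with rfl | ⟨i, rfl⟩
      · simpa using hd.imp (fun h => h) (fun h => Or.inr h)
      · simpa using hdig i
    · rw [bsdVal_cons, hv]; omega
  · intro b hb
    rw [Finset.mem_filter] at hb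
    rw [← hb.2, Fin.cons_self_tail]
  · intro c _
    simp
  · intro b hb
    rw [Finset.mem_filter] at hb
    have hd0 : d ≠ 0 := by rcases hd with rfl | rfl <;> norm_num
    have hz : zeros b = zeros (Fin.tail b) := by
      have h3 := zeros_cons (b 0) (Fin.tail b)
      rw [Fin.cons_self_tail, hb.2, if_neg hd0] at h3
      simpa using h3
    rw [hz]

lemma repPoly_odd (k : ℕ) (n : ℤ) (hn : n % 2 = 1) :
    repPoly (k + 1) n = repPoly k ((n - 1) / 2) + repPoly k ((n + 1) / 2) := by
  have hsplit := Finset.sum_filter_add_sum_filter_not (reps (k + 1) n)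
    (fun b => b 0 = 1) (fun b => (X : Polynomial ℕ) ^ zeros b)
  have h1 : ∑ b ∈ (reps (k + 1) n).filter (fun b => b 0 = 1), (X : Polynomial ℕ) ^ zeros b
      = repPoly k ((n - 1) / 2) := sum_filter_digit k n 1 (Or.inr rfl) (by omega)
  have hfc : (reps (k + 1) n).filter (fun b => ¬ b 0 = 1)
      = (reps (k + 1) n).filter (fun b => b 0 = -1) := by
    apply Finset.filter_congr
    intro b hb
    rw [mem_reps] at hb
    obtain ⟨hdig, hv⟩ := hb
    have hb0 : b 0 = -1 ∨ b 0 = 0 ∨ b 0 = 1 := hdig 0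
    have hc : bsdVal (Fin.cons (b 0) (Fin.tail b)) = n := by rw [Fin.cons_self_tail]; exact hv
    rw [bsdVal_cons] at hc
    constructor
    · intro h; omega
    · intro h; omega
  have h2 : ∑ b ∈ (reps (k + 1) n).filter (fun b => b 0 = -1), (X : Polynomial ℕ) ^ zeros b
      = repPoly k ((n + 1) / 2) := by
    have := sum_filter_digit k n (-1) (Or.inl rfl) (by omega)
    rw [this]
    norm_num
  rw [repPoly, ← hsplit, h1, hfc, h2]

lemma repPoly_base (n : ℤ) : repPoly 0 n = if n = 0 then 1 else 0 := by
  rcases eq_or_ne n 0 with rfl | hn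
  · rw [if_pos rfl, repPoly]
    have : reps 0 (0 : ℤ) = {(fun j => (0 : ℤ) : Fin 0 → ℤ)} := by
      ext b
      rw [mem_reps]
      simp only [Finset.mem_singleton]
      constructor
      · intro _; funext j; exact absurd j.2 (by omega)
      · intro hb
        subst hb
        exact ⟨fun j => absurd j.2 (by omega), by simp [bsdVal]⟩
    rw [this, Finset.sum_singleton]
    have : zeros (fun j => (0 : ℤ) : Fin 0 → ℤ) = 0 := by simp [zeros]
    rw [this, pow_zero]
  · rw [if_neg hn, repPoly]
    have : reps 0 n = ∅ := by
      ext b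
      rw [mem_reps]
      simp only [Finset.notMem_empty, iff_false]
      rintro ⟨-, hv⟩
      apply hn
      rw [← hv, bsdVal]
      simp
    rw [this, Finset.sum_empty]

lemma repPoly_eq (k : ℕ) : ∀ n : ℕ, n ≤ 2 ^ k → repPoly k (n : ℤ) = sternP (2 ^ k - n) := by
  induction k with
  | zero =>
    intro n hn
    interval_cases n
    · norm_num [repPoly_base, sternP_one]
    · norm_num [repPoly_base, sternP_zero]
  | succ k ih =>
    intro n hn
    rcases Nat.even_or_odd n with ⟨a, ha⟩ | ⟨a, ha⟩
    · -- n = 2 * a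
      have ha' : n = 2 * a := by omega
      subst ha'
      have hcast : ((2 * a : ℕ) : ℤ) % 2 = 0 := by push_cast; omega
      rw [repPoly_even k _ hcast]
      have hdiv : ((2 * a : ℕ) : ℤ) / 2 = (a : ℤ) := by push_cast; omega
      rw [hdiv]
      have hak : a ≤ 2 ^ k := by
        have : 2 ^ (k + 1) = 2 * 2 ^ k := by ring
        omega
      rw [ih a hak]
      rcases eq_or_lt_of_le hak with rfl | hlt
      · have h1 : 2 ^ (k + 1) - 2 * 2 ^ k = 0 := by
          have : 2 ^ (k + 1) = 2 * 2 ^ k := by ring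
          omega
        have h2 : 2 ^ k - 2 ^ k = 0 := by omega
        rw [h1, h2, sternP_zero, mul_zero]
      · have h1 : 2 ^ (k + 1) - 2 * a = 2 * (2 ^ k - a) := by
          have : 2 ^ (k + 1) = 2 * 2 ^ k := by ring
          omega
        rw [h1, sternP_two_mul _ (by omega)]
    · -- n = 2 * a + 1
      subst ha
      have hcast : ((2 * a + 1 : ℕ) : ℤ) % 2 = 1 := by push_cast; omega
      rw [repPoly_odd k _ hcast]
      have hd1 : (((2 * a + 1 : ℕ) : ℤ) - 1) / 2 = (a : ℤ) := by push_cast; omega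
      have hd2 : (((2 * a + 1 : ℕ) : ℤ) + 1) / 2 = ((a + 1 : ℕ) : ℤ) := by push_cast; omega
      rw [hd1, hd2]
      have h2k : 2 ^ (k + 1) = 2 * 2 ^ k := by ring
      have hak : a ≤ 2 ^ k := by omega
      have hak1 : a + 1 ≤ 2 ^ k := by omega
      rw [ih a hak, ih (a + 1) hak1]
      have h1 : 2 ^ (k + 1) - (2 * a + 1) = 2 * (2 ^ k - (a + 1)) + 1 := by omega
      rw [h1, sternP_odd]
      have h3 : 2 ^ k - (a + 1) + 1 = 2 ^ k - a := by omega
      rw [h3]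
      exact add_comm _ _


lemma sum_two_pow (k : ℕ) : ∑ j ∈ Finset.range k, (2 : ℤ) ^ j = 2 ^ k - 1 := by
  induction k with
  | zero => simp
  | succ k ih => rw [Finset.sum_range_succ, ih]; ring

lemma val_lt {k : ℕ} {n : ℤ} {b : Fin k → ℤ} (hb : b ∈ reps k n) : n < 2 ^ k := by
  rw [mem_reps] at hb
  obtain ⟨hd, hv⟩ := hb
  have h1 : bsdVal b ≤ ∑ j : Fin k, (2 : ℤ) ^ (j : ℕ) := by
    apply Finset.sum_le_sum
    intro j _
    have hj := hd j
    have h2 : (0 : ℤ) ≤ 2 ^ (j : ℕ) := by positivity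
    have hb1 : b j ≤ 1 := by rcases hj with h | h | h <;> omega
    have h3 := mul_le_mul_of_nonneg_right hb1 h2
    simpa using h3
  rw [Fin.sum_univ_eq_sum_range (fun j => (2 : ℤ) ^ j) k, sum_two_pow] at h1
  omega

lemma repPoly_coeff (k : ℕ) (n : ℤ) (d : ℕ) :
    (repPoly k n).coeff d = ((reps k n).filter fun b => zeros b = d).card := by
  rw [repPoly, Polynomial.finset_sum_coeff, Finset.card_filter]
  apply Finset.sum_congr rfl
  intro b _
  rw [Polynomial.coeff_X_pow]
  simp [eq_comm]

lemma zeros_wt {k : ℕ} (b : Fin k → ℤ) :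
    zeros b + (Finset.univ.filter fun j => b j ≠ 0).card = k := by
  have := Finset.card_filter_add_card_filter_not
    (s := (Finset.univ : Finset (Fin k))) (p := fun j => b j = 0)
  simpa [zeros] using this

lemma ncard_ne_zero {k : ℕ} (b : Fin k → ℤ) :
    {j | b j ≠ 0}.ncard = (Finset.univ.filter fun j => b j ≠ 0).card := by
  rw [Set.ncard_eq_toFinset_card']
  simp [Set.toFinset_setOf]

theorem opt_count_stern (n k : ℕ) (hn : 0 < n) (h : HasNAFLen (n : ℤ) k) :
    {b : Fin k → ℤ | IsBSDDigits b ∧ bsdVal b = (n : ℤ) ∧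
        {j | b j ≠ 0}.ncard
          = sInf {w | ∃ c : Fin k → ℤ, IsBSDDigits c ∧ bsdVal c = (n : ℤ) ∧
              {j | c j ≠ 0}.ncard = w}}.ncard
      = (sternP (2 ^ k - n)).leadingCoeff ∧
    k - sInf {w | ∃ c : Fin k → ℤ, IsBSDDigits c ∧ bsdVal c = (n : ℤ) ∧
          {j | c j ≠ 0}.ncard = w}
      = (sternP (2 ^ k - n)).natDegree := by
  classical
  obtain ⟨b0, hb0naf, hb0val⟩ := h
  set F := reps k (n : ℤ) with hF
  have hmem : ∀ b : Fin k → ℤ, b ∈ F ↔ IsBSDDigits b ∧ bsdVal b = (n : ℤ) := by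
    intro b
    rw [hF, mem_reps]
    unfold IsBSDDigits
    simp only [Set.mem_insert_iff, Set.mem_singleton_iff]
  have hb0F : b0 ∈ F := (hmem b0).2 ⟨hb0naf.1, hb0val⟩
  set wt : (Fin k → ℤ) → ℕ := fun b => (Finset.univ.filter fun j => b j ≠ 0).card with hwt
  have hzw : ∀ b : Fin k → ℤ, zeros b + wt b = k := fun b => zeros_wt b
  have hncard : ∀ b : Fin k → ℤ, {j | b j ≠ 0}.ncard = wt b := fun b => ncard_ne_zero b
  set S := {w | ∃ c : Fin k → ℤ, IsBSDDigits c ∧ bsdVal c = (n : ℤ) ∧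
      {j | c j ≠ 0}.ncard = w} with hS
  have hSiff : ∀ w, w ∈ S ↔ ∃ c ∈ F, wt c = w := by
    intro w
    constructor
    · rintro ⟨c, h1, h2, h3⟩
      exact ⟨c, (hmem c).2 ⟨h1, h2⟩, by rw [← hncard c]; exact h3⟩
    · rintro ⟨c, hc, rfl⟩
      exact ⟨c, ((hmem c).1 hc).1, ((hmem c).1 hc).2, hncard c⟩
  have hSne : S.Nonempty := ⟨wt b0, (hSiff _).2 ⟨b0, hb0F, rfl⟩⟩
  obtain ⟨c0, hc0F, hc0w⟩ := (hSiff (sInf S)).1 (Nat.sInf_mem hSne)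
  have hle : ∀ b ∈ F, sInf S ≤ wt b := fun b hb => Nat.sInf_le ((hSiff _).2 ⟨b, hb, rfl⟩)
  have hnlt : n < 2 ^ k := by
    have h1 := val_lt hb0F
    have h2 : ((2 : ℤ) ^ k) = ((2 ^ k : ℕ) : ℤ) := by push_cast; ring
    rw [h2] at h1
    exact_mod_cast h1
  have hps : sternP (2 ^ k - n) = repPoly k (n : ℤ) := (repPoly_eq k n hnlt.le).symm
  have hzmax : ∀ b ∈ F, zeros b ≤ k - sInf S := by
    intro b hb
    have := hzw b
    have := hle b hb
    omega
  have hc0z : zeros c0 = k - sInf S := by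
    have h1 := hzw c0
    have h2 := hzw b0
    have h3 := hle b0 hb0F
    omega
  have hdeg : (repPoly k (n : ℤ)).natDegree = k - sInf S := by
    apply le_antisymm
    · rw [Polynomial.natDegree_le_iff_coeff_eq_zero]
      intro m hm
      rw [repPoly_coeff, Finset.card_eq_zero, Finset.filter_eq_empty_iff]
      intro b hb
      have := hzmax b hb
      omega
    · apply Polynomial.le_natDegree_of_ne_zero
      rw [repPoly_coeff]
      have hmem' : c0 ∈ (reps k (n : ℤ)).filter fun b => zeros b = k - sInf S :=
        Finset.mem_filter.2 ⟨hc0F, hc0z⟩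
      have hpos := Finset.card_pos.2 ⟨c0, hmem'⟩
      omega
  have hlead : (repPoly k (n : ℤ)).leadingCoeff
      = ((reps k (n : ℤ)).filter fun b => zeros b = k - sInf S).card := by
    rw [Polynomial.leadingCoeff, hdeg, repPoly_coeff]
  constructor
  · have hset : {b : Fin k → ℤ | IsBSDDigits b ∧ bsdVal b = (n : ℤ) ∧
        {j | b j ≠ 0}.ncard = sInf S}
        = ↑((reps k (n : ℤ)).filter fun b => zeros b = k - sInf S) := by
      ext b
      simp only [Set.mem_setOf_eq, Finset.coe_filter]
      constructor
      · rintro ⟨h1, h2, h3⟩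
        have hbF : b ∈ F := (hmem b).2 ⟨h1, h2⟩
        refine ⟨hbF, ?_⟩
        rw [hncard b] at h3
        have h4 := hzw b
        have h5 := hzw c0
        have h6 := hle c0 hc0F
        omega
      · rintro ⟨hbF, hz⟩
        obtain ⟨h1, h2⟩ := (hmem b).1 hbF
        refine ⟨h1, h2, ?_⟩
        rw [hncard b]
        have h4 := hzw b
        have h5 := hzw c0
        have h6 := hle b hbF
        omega
    rw [hps, hlead, hset, Set.ncard_coe_finset]
  · rw [hps, hdeg]
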